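/- Assume the robust control Lyapunov hypothesis holds. Then for every horizon N and every x ∈ CS, the min–max LMPC value is bounded by the terminal cost: V N x ≤ (Q x : EReal). In particular, V N x < ⊤ for all x ∈ CS, so every state of the safe set is feasible for the LMPC problem. -/

import Mathlib

/-- Feasibility of the LMPC from the safe set (inequality
`J^{LMPC}(x₀) ≤ Q^j(x₀)` used in the proof of Theorem 2): under the robust
control Lyapunov hypothesis, the min–max value over any horizon `N` is
bounded by the terminal cost on `CS`; in particular it is finite there. -/
theorem lmpc_value_le_terminal_cost
    {n d : ℕ}
    (A : (Fin n → ℝ) →ₗ[ℝ] (Fin n → ℝ)) (B : (Fin d → ℝ) →ₗ[ℝ] (Fin n → ℝ))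
    (W X : Set (Fin n → ℝ)) (U : Set (Fin d → ℝ))
    (hW : W.Nonempty)
    (h : (Fin n → ℝ) × (Fin d → ℝ) → ℝ)
    (hpos : ∀ x u, 0 ≤ h (x, u))
    (CS : Set (Fin n → ℝ)) (hCSX : CS ⊆ X)
    (Q : (Fin n → ℝ) → ℝ) (hQ0 : ∀ x ∈ CS, 0 ≤ Q x)
    (Qbar : (Fin n → ℝ) → EReal)
    (hQbarIn : ∀ x ∈ CS, Qbar x = (Q x : EReal))
    (hQbarOut : ∀ x ∉ CS, Qbar x = ⊤)
    (T : ((Fin n → ℝ) → EReal) → (Fin n → ℝ) → EReal)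
    (hTin : ∀ f, ∀ x ∈ X, T f x =
      ⨅ u ∈ U, ⨆ w ∈ W, ((h (x, u) : EReal) + f (A x + B u + w)))
    (hTout : ∀ f, ∀ x ∉ X, T f x = ⊤)
    (V : ℕ → (Fin n → ℝ) → EReal)
    (hV0 : V 0 = Qbar) (hVs : ∀ k, V (k + 1) = T (V k))
    (hRCL : ∀ x ∈ CS, ∃ u ∈ U, ∀ w ∈ W,
      A x + B u + w ∈ CS ∧ h (x, u) + Q (A x + B u + w) ≤ Q x) :
    ∀ (N : ℕ), ∀ x ∈ CS, V N x ≤ (Q x : EReal) ∧ V N x < ⊤ := by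
  have key : ∀ (N : ℕ), ∀ x ∈ CS, V N x ≤ (Q x : EReal) := by
    intro N
    induction N with
    | zero =>
      intro x hx
      rw [hV0, hQbarIn x hx]
    | succ k ih =>
      intro x hx
      obtain ⟨u, hu, hw⟩ := hRCL x hx
      rw [hVs k, hTin (V k) x (hCSX hx)]
      refine le_trans (iInf₂_le u hu) ?_
      refine iSup₂_le fun w hwW => ?_
      obtain ⟨hmem, hineq⟩ := hw w hwW
      calc (h (x, u) : EReal) + V k (A x + B u + w)
          ≤ (h (x, u) : EReal) + (Q (A x + B u + w) : EReal) := by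
            exact add_le_add_right (ih _ hmem) _
        _ = ((h (x, u) + Q (A x + B u + w) : ℝ) : EReal) := by
            rw [EReal.coe_add]
        _ ≤ (Q x : EReal) := EReal.coe_le_coe_iff.mpr hineq
  intro N x hx
  exact ⟨key N x hx, lt_of_le_of_lt (key N x hx) (EReal.coe_lt_top _)⟩
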